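/- arXiv:2007.09705 — 2 statements merged into one kernel-verified Lean document; each statement's English description precedes it below -/
import Mathlib

section
/- Characterization of row 1: for every n, the digit string G(1,n) contains exactly one occurrence of the digit 2 and every digit to the right of that 2 equals 0 (and every digit to its left is 0 or 1); conversely, every digit string whose first digit is not 0, which contains exactly one digit 2 with all digits to the right of the 2 equal to 0 and all digits to the left of the 2 in {0,1}, equals G(1,n) for some n. -/
abbrev Digit := Fin 3

/-- Helper for `addTwo`, acting on the reversed (least significant digit first) string:
replace each digit `d` by `d - 1 (mod 3)` up to and including the first digit 0;
if no digit 0 occurs, a digit 0 is first prepended at the most significant end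
(and then becomes 2). -/
def addTwoAux : List Digit → List Digit
  | [] => [2]
  | d :: rest => if d = 0 then (d + 2) :: rest else (d + 2) :: addTwoAux rest

/-- Adding two in base 3/2: all digits at or to the right of the rightmost 0
(including that 0) are decreased by 1 modulo 3; if there is no 0, a 0 is first
prepended. -/
def addTwo (w : List Digit) : List Digit := (addTwoAux w.reverse).reverse

/-- Binary representation of `j` (digits 0 and 1, most significant first, no leading
zeros), with `binRep 0 = [0]`. -/
def binRep (j : ℕ) : List Digit :=
  if j = 0 then [0] else (Nat.digits 2 j).reverse.map (fun d : ℕ => (Fin.ofNat 3 d : Digit))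

/-- The grid: row 0 consists of the binary representations in increasing order, and
each subsequent row is obtained entrywise by adding two in base 3/2. -/
def G : ℕ → ℕ → List Digit
  | 0, j => binRep j
  | i + 1, j => addTwo (G i j)

lemma one_add_two : (1 : Digit) + 2 = 0 := rfl
lemma zero_add_two : (0 : Digit) + 2 = 2 := rfl

lemma mem_map_cast {l : List ℕ} (h : ∀ m ∈ l, m < 2) :
    ∀ d ∈ l.map (fun m : ℕ => (Fin.ofNat 3 m : Digit)), d = 0 ∨ d = 1 := by
  induction l with
  | nil => simp
  | cons a t ih =>
    intro d hd
    rw [List.map_cons] at hd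
    rcases List.mem_cons.1 hd with rfl | hd
    · have ha : a < 2 := h a (by simp)
      interval_cases a
      · left; rfl
      · right; rfl
    · exact ih (fun m hm => h m (by simp [hm])) d hd

lemma flatMap_cast_val (t : List Digit) :
    ((List.map Fin.val t).flatMap fun a => [(Fin.ofNat 3 (a : ℕ) : Digit)]) = t := by
  induction t with
  | nil => rfl
  | cons a t ih => simpa [Function.comp_def, Fin.ofNat_val_eq_self] using ih

lemma binRep_digits (n : ℕ) : ∀ d ∈ binRep n, d = 0 ∨ d = 1 := by
  intro d hd
  by_cases h : n = 0
  · simp [binRep, h] at hd; left; exact hd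
  · rw [binRep, if_neg h] at hd
    simp at hd
    obtain ⟨m, hm, rfl⟩ := hd
    have : m < 2 := Nat.digits_lt_base (by norm_num) hm
    interval_cases m
    · left; rfl
    · right; rfl

lemma addTwoAux_split (l : List Digit) (h : ∀ d ∈ l, d = 0 ∨ d = 1) :
    ∃ Z Y : List Digit, addTwoAux l = Z ++ [2] ++ Y ∧ (∀ d ∈ Z, d = 0) ∧
      (∀ d ∈ Y, d = 0 ∨ d = 1) := by
  induction l with
  | nil => exact ⟨[], [], rfl, by simp, by simp⟩
  | cons d rest ih =>
    rcases h d (by simp) with h0 | h1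
    · subst h0
      refine ⟨[], rest, ?_, by simp, fun x hx => h x (by simp [hx])⟩
      simp [addTwoAux, zero_add_two]
    · subst h1
      obtain ⟨Z, Y, hZY, hZ, hY⟩ := ih (fun x hx => h x (by simp [hx]))
      refine ⟨0 :: Z, Y, ?_, ?_, hY⟩
      · rw [addTwoAux, if_neg (by decide), hZY, one_add_two]
        simp
      · intro x hx
        rcases List.mem_cons.1 hx with rfl | hx
        · rfl
        · exact hZ x hx

lemma binRep_surj (v' : List Digit) (hv : ∀ d ∈ v', d = 0 ∨ d = 1) :
    ∃ n, binRep n = 1 :: v' := by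
  have hlt : ∀ d ∈ (List.map Fin.val v').reverse ++ [1], d < 2 := by
    intro d hd
    rw [List.mem_append] at hd
    rcases hd with hd | hd
    · rw [List.mem_reverse, List.mem_map] at hd
      obtain ⟨x, hx, rfl⟩ := hd
      rcases hv x hx with rfl | rfl <;> norm_num
    · simp at hd; omega
  have hLne : (List.map Fin.val v').reverse ++ [1] ≠ [] := by simp
  have hlast : (List.map Fin.val v').reverse ++ [1] ≠ [] →
      ((List.map Fin.val v').reverse ++ [1]).getLast (by assumption) ≠ 0 := by
    intro _
    simp
  refine ⟨Nat.ofDigits 2 ((List.map Fin.val v').reverse ++ [1]), ?_⟩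
  have hdig := Nat.digits_ofDigits 2 (by norm_num) _ hlt hlast
  have hne0 : Nat.ofDigits 2 ((List.map Fin.val v').reverse ++ [1]) ≠ 0 := by
    intro h
    apply hLne
    rw [← hdig, h, Nat.digits_zero]
  rw [binRep, if_neg hne0, hdig]
  simp [List.map_map, flatMap_cast_val, Function.comp_def, Fin.ofNat_val_eq_self]
  rfl

lemma addTwoAux_rep (t : List Digit) : ∀ k,
    addTwoAux (List.replicate k 1 ++ 0 :: t) = List.replicate k 0 ++ 2 :: t := by
  intro k
  induction k with
  | zero => simp [addTwoAux, zero_add_two]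
  | succ k ih =>
    have h1 : List.replicate (k+1) (1:Digit) ++ 0 :: t
        = 1 :: (List.replicate k 1 ++ 0 :: t) := by simp [List.replicate_succ]
    rw [h1, addTwoAux, if_neg (by decide), ih, one_add_two]
    simp [List.replicate_succ]

lemma addTwoAux_rep' : ∀ k, addTwoAux (List.replicate (k : ℕ) (1 : Digit)) =
    List.replicate k 0 ++ [2] := by
  intro k
  induction k with
  | zero => simp [addTwoAux]
  | succ k ih =>
    rw [List.replicate_succ, addTwoAux, if_neg (by decide), ih, one_add_two]
    simp [List.replicate_succ]

/-- Characterization of row 1: every entry of row 1 consists of a (possibly empty)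
string of digits 0 and 1, followed by exactly one digit 2, followed by a (possibly
empty) string of zeros; conversely every such digit string not starting with the
digit 0 is an entry of row 1. -/
theorem row_one_characterization :
    (∀ n : ℕ, ∃ Y Z : List Digit,
      G 1 n = Y ++ [2] ++ Z ∧ (∀ d ∈ Y, d = 0 ∨ d = 1) ∧ (∀ d ∈ Z, d = 0)) ∧
    (∀ w : List Digit, w.head? ≠ some 0 →
      (∃ Y Z : List Digit,
        w = Y ++ [2] ++ Z ∧ (∀ d ∈ Y, d = 0 ∨ d = 1) ∧ (∀ d ∈ Z, d = 0)) →
      ∃ n : ℕ, G 1 n = w) := by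
  constructor
  · intro n
    have h := binRep_digits n
    have h' : ∀ d ∈ (binRep n).reverse, d = 0 ∨ d = 1 := by
      intro d hd; exact h d (List.mem_reverse.1 hd)
    obtain ⟨Z, Y, hZY, hZ, hY⟩ := addTwoAux_split _ h'
    refine ⟨Y.reverse, Z.reverse, ?_, ?_, ?_⟩
    · show addTwo (binRep n) = _
      rw [addTwo, hZY]
      simp
    · intro d hd; exact hY d (List.mem_reverse.1 hd)
    · intro d hd; exact hZ d (List.mem_reverse.1 hd)
  · rintro w hhead ⟨Y, Z, rfl, hY, hZ⟩
    have hZr : Z = List.replicate Z.length (0 : Digit) :=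
      List.eq_replicate_of_mem hZ
    rcases eq_or_ne Y [] with rfl | hYne
    · rcases Nat.eq_zero_or_pos Z.length with hk0 | hkpos
      · have hZnil : Z = [] := List.eq_nil_of_length_eq_zero hk0
        refine ⟨0, ?_⟩
        rw [hZnil]
        decide
      · obtain ⟨k', hk'⟩ : ∃ k', Z.length = k' + 1 := ⟨Z.length - 1, by omega⟩
        obtain ⟨n, hn⟩ := binRep_surj (List.replicate k' 1)
          (by intro d hd; right; exact (List.eq_of_mem_replicate hd))
        have hrep : (1 : Digit) :: List.replicate k' 1 = List.replicate (k'+1) 1 :=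
          (List.replicate_succ (a := 1) (n := k')).symm
        refine ⟨n, ?_⟩
        show addTwo (binRep n) = _
        rw [hn, hrep, addTwo, List.reverse_replicate, addTwoAux_rep']
        rw [hZr, hk']
        simp [List.reverse_replicate]
    · obtain ⟨y, Y', rfl⟩ := List.exists_cons_of_ne_nil hYne
      have hy1 : y = 1 := by
        rcases hY y (by simp) with rfl | rfl
        · exfalso; apply hhead; rfl
        · rfl
      subst hy1
      obtain ⟨n, hn⟩ := binRep_surj (Y' ++ 0 :: List.replicate Z.length 1)
        (by
          intro d hd
          simp only [List.mem_append, List.mem_cons] at hd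
          rcases hd with h1 | h1
          · exact hY d (by simp [h1])
          · rcases h1 with rfl | h1
            · left; rfl
            · right; exact List.eq_of_mem_replicate h1)
      rw [show (1 : Digit) :: (Y' ++ 0 :: List.replicate Z.length 1)
          = (1 :: Y') ++ 0 :: List.replicate Z.length 1 from rfl] at hn
      refine ⟨n, ?_⟩
      show addTwo (binRep n) = _
      have hrev : ((1 :: Y') ++ 0 :: List.replicate Z.length 1).reverse
          = List.replicate Z.length 1 ++ 0 :: (1 :: Y').reverse := by
        simp [List.reverse_replicate]
      rw [hn, addTwo, hrev, addTwoAux_rep]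
      conv_rhs => rw [hZr]
      simp [List.reverse_replicate]
end

section
/- Inductive step for rows of the form 3a+2: let a ≥ 0, and suppose that every row k < 3a+2 dominates all later rows. Then row 3a+2 dominates all later rows. -/
/-- Base-3 value of a digit string (most significant digit first). -/
def val3 (w : List Digit) : ℕ := w.foldl (fun acc d => 3 * acc + d.val) 0

/-- Row `j` dominates all later rows: every entry of any row below row `j`,
interpreted in base 3, is the last term of a nondegenerate three-term arithmetic
progression whose first two terms are entries of row `j` interpreted in base 3. -/
def Dominates (j : ℕ) : Prop :=
  ∀ i n : ℕ, j < i → ∃ p q : ℕ,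
    val3 (G j p) < val3 (G j q) ∧ val3 (G j q) < val3 (G i n) ∧
    val3 (G j p) + val3 (G i n) = 2 * val3 (G j q)

lemma val3_append (w : List Digit) (d : Digit) :
    val3 (w ++ [d]) = 3 * val3 w + d.val := by
  simp [val3, List.foldl_append]

lemma val3_zero_cons (w : List Digit) : val3 ((0 : Digit) :: w) = val3 w := by
  simp [val3]

lemma addTwo_append0 (w : List Digit) :
    addTwo (w ++ [(0 : Digit)]) = w ++ [(2 : Digit)] := by
  simp [addTwo, addTwoAux]

lemma addTwo_append1 (w : List Digit) :
    addTwo (w ++ [(1 : Digit)]) = addTwo w ++ [(0 : Digit)] := by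
  simp [addTwo, addTwoAux]

lemma addTwo_append2 (w : List Digit) :
    addTwo (w ++ [(2 : Digit)]) = addTwo w ++ [(1 : Digit)] := by
  simp [addTwo, addTwoAux]

lemma iter30 (t : ℕ) (w : List Digit) :
    addTwo^[3*t] (w ++ [0]) = addTwo^[2*t] w ++ [0] := by
  induction t generalizing w with
  | zero => simp
  | succ t ihh =>
    have h3 : 3 * (t+1) = 3 + 3*t := by ring
    have h2 : 2 * (t+1) = 2 + 2*t := by ring
    rw [h3, h2, Function.iterate_add_apply, ihh, Function.iterate_add_apply]
    show addTwo (addTwo (addTwo (addTwo^[2*t] w ++ [0])))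
        = addTwo (addTwo (addTwo^[2*t] w)) ++ [0]
    rw [addTwo_append0, addTwo_append2, addTwo_append1]

lemma iter31 (t : ℕ) (w : List Digit) :
    addTwo^[3*t+1] (w ++ [0]) = addTwo^[2*t] w ++ [2] := by
  rw [Function.iterate_succ_apply', iter30, addTwo_append0]

lemma iter32 (t : ℕ) (w : List Digit) :
    addTwo^[3*t+2] (w ++ [0]) = addTwo^[2*t+1] w ++ [1] := by
  rw [show 3*t+2 = (3*t+1)+1 from rfl, Function.iterate_succ_apply', iter31,
      addTwo_append2, Function.iterate_succ_apply']

lemma iter1_0 (t : ℕ) (w : List Digit) :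
    addTwo^[3*t+1] (w ++ [1]) = addTwo^[2*t+1] w ++ [0] := by
  rw [Function.iterate_succ_apply, addTwo_append1, iter30, Function.iterate_succ_apply]

lemma iter1_1 (t : ℕ) (w : List Digit) :
    addTwo^[3*t+2] (w ++ [1]) = addTwo^[2*t+1] w ++ [2] := by
  rw [show 3*t+2 = (3*t+1)+1 from rfl, Function.iterate_succ_apply, addTwo_append1,
      iter31, Function.iterate_succ_apply]

lemma iter1_2 (t : ℕ) (w : List Digit) :
    addTwo^[3*t+3] (w ++ [1]) = addTwo^[2*t+2] w ++ [1] := by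
  rw [show 3*t+3 = (3*t+2)+1 from rfl, Function.iterate_succ_apply, addTwo_append1,
      iter32]
  rfl

lemma addTwoAux_append0 (l : List Digit) :
    addTwoAux (l ++ [0]) = addTwoAux l ++ [0] ∨ addTwoAux (l ++ [0]) = addTwoAux l := by
  induction l with
  | nil => right; simp [addTwoAux]
  | cons d rest ihh =>
    by_cases hd : d = 0
    · left; simp [addTwoAux, hd]
    · rcases ihh with h | h
      · left; simp [addTwoAux, hd, h]
      · right; simp [addTwoAux, hd, h]

lemma addTwo_zero_cons (w : List Digit) :
    addTwo ((0:Digit) :: w) = (0:Digit) :: addTwo w ∨ addTwo ((0:Digit) :: w) = addTwo w := by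
  rcases addTwoAux_append0 w.reverse with h | h
  · left; simp [addTwo, h]
  · right; simp [addTwo, h]

lemma val3_iter_zero_cons (k : ℕ) : ∀ w : List Digit,
    val3 (addTwo^[k] ((0:Digit) :: w)) = val3 (addTwo^[k] w) := by
  induction k with
  | zero => intro w; simpa using val3_zero_cons w
  | succ k ihh =>
    intro w
    rw [Function.iterate_succ_apply, Function.iterate_succ_apply]
    rcases addTwo_zero_cons w with h | h
    · rw [h]; exact ihh (addTwo w)
    · rw [h]

lemma G_eq_iter (i j : ℕ) : G i j = addTwo^[i] (binRep j) := by
  induction i with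
  | zero => rfl
  | succ i ihh => rw [Function.iterate_succ_apply', ← ihh]; rfl

lemma binRep_two_mul (j : ℕ) (h : j ≠ 0) : binRep (2*j) = binRep j ++ [0] := by
  have h2 : 2*j ≠ 0 := by omega
  unfold binRep
  rw [if_neg h2, if_neg h]
  rw [Nat.digits_def' (by norm_num : 1 < 2) (by omega : 0 < 2*j)]
  simp [Nat.mul_div_cancel_left, Nat.mul_mod_right]

lemma binRep_two_mul_add_one (j : ℕ) (h : j ≠ 0) :
    binRep (2*j+1) = binRep j ++ [1] := by
  unfold binRep
  rw [if_neg (by omega : 2*j+1 ≠ 0), if_neg h]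
  rw [Nat.digits_def' (by norm_num : 1 < 2) (by omega : 0 < 2*j+1)]
  have : (2*j+1) % 2 = 1 := by omega
  have h2 : (2*j+1) / 2 = j := by omega
  simp [this, h2]
  rfl

lemma binRep_zero : binRep 0 = [0] := rfl

lemma binRep_one : binRep 1 = [1] := by
  unfold binRep
  rw [if_neg (by norm_num)]
  rw [Nat.digits_def' (by norm_num : 1 < 2) (by norm_num : 0 < 1)]
  simp
  rfl

lemma binE (j : ℕ) : ∃ w : List Digit, binRep (2*j) = w ++ [0] ∧
    ∀ k, val3 (addTwo^[k] w) = val3 (addTwo^[k] (binRep j)) := by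
  rcases eq_or_ne j 0 with rfl | h
  · exact ⟨[], by simp [binRep_zero], fun k => (val3_iter_zero_cons k []).symm⟩
  · exact ⟨binRep j, binRep_two_mul j h, fun k => rfl⟩

lemma binO (j : ℕ) : ∃ w : List Digit, binRep (2*j+1) = w ++ [1] ∧
    ∀ k, val3 (addTwo^[k] w) = val3 (addTwo^[k] (binRep j)) := by
  rcases eq_or_ne j 0 with rfl | h
  · exact ⟨[], by simp [binRep_one], fun k => (val3_iter_zero_cons k []).symm⟩
  · exact ⟨binRep j, binRep_two_mul_add_one j h, fun k => rfl⟩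

lemma vE (t j : ℕ) :
    val3 (G (3*t) (2*j)) = 3 * val3 (G (2*t) j)
    ∧ val3 (G (3*t+1) (2*j)) = 3 * val3 (G (2*t) j) + 2
    ∧ val3 (G (3*t+2) (2*j)) = 3 * val3 (G (2*t+1) j) + 1 := by
  obtain ⟨w, hw, hv⟩ := binE j
  rw [G_eq_iter (3*t), G_eq_iter (3*t+1), G_eq_iter (3*t+2),
      G_eq_iter (2*t), G_eq_iter (2*t+1), hw, iter30, iter31, iter32,
      val3_append, val3_append, val3_append, hv (2*t), hv (2*t+1)]
  refine ⟨by simp, by simp, by simp⟩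

lemma vO (t j : ℕ) :
    val3 (G (3*t+1) (2*j+1)) = 3 * val3 (G (2*t+1) j)
    ∧ val3 (G (3*t+2) (2*j+1)) = 3 * val3 (G (2*t+1) j) + 2
    ∧ val3 (G (3*t+3) (2*j+1)) = 3 * val3 (G (2*t+2) j) + 1 := by
  obtain ⟨w, hw, hv⟩ := binO j
  rw [G_eq_iter (3*t+1), G_eq_iter (3*t+2), G_eq_iter (3*t+3),
      G_eq_iter (2*t+1), G_eq_iter (2*t+2), hw, iter1_0, iter1_1, iter1_2,
      val3_append, val3_append, val3_append, hv (2*t+1), hv (2*t+2)]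
  refine ⟨by simp, by simp, by simp⟩

/-- Inductive step for rows of the form `3a + 2`: if every row `k < 3a + 2` dominates
all later rows, then row `3a + 2` dominates all later rows. -/
theorem row_3a2_step (a : ℕ)
    (ih : ∀ k : ℕ, k < 3 * a + 2 → Dominates k) : Dominates (3 * a + 2) := by
  intro i n hi
  have hd : Dominates (2*a+1) := ih (2*a+1) (by omega)
  have hkey : ∃ i' m c, 2*a+1 < i' ∧ c ≤ 2 ∧
      val3 (G i n) = 3 * val3 (G i' m) + c := by
    rcases Nat.even_or_odd n with ⟨m, hm⟩ | ⟨m, hm⟩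
    · have hn : n = 2*m := by omega
      obtain ⟨t, ht⟩ : ∃ t, i = 3*t ∨ i = 3*t+1 ∨ i = 3*t+2 := ⟨i/3, by omega⟩
      rcases ht with h|h|h
      · exact ⟨2*t, m, 0, by omega, by omega, by rw [hn, h]; simpa using (vE t m).1⟩
      · exact ⟨2*t, m, 2, by omega, by omega, by rw [hn, h]; exact (vE t m).2.1⟩
      · exact ⟨2*t+1, m, 1, by omega, by omega, by rw [hn, h]; exact (vE t m).2.2⟩
    · have hn : n = 2*m+1 := hm
      obtain ⟨t, ht⟩ : ∃ t, i = 3*t+1 ∨ i = 3*t+2 ∨ i = 3*t+3 := ⟨(i-1)/3, by omega⟩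
      rcases ht with h|h|h
      · exact ⟨2*t+1, m, 0, by omega, by omega, by rw [hn, h]; simpa using (vO t m).1⟩
      · exact ⟨2*t+1, m, 2, by omega, by omega, by rw [hn, h]; exact (vO t m).2.1⟩
      · exact ⟨2*t+2, m, 1, by omega, by omega, by rw [hn, h]; exact (vO t m).2.2⟩
  obtain ⟨i', m, c, hi', hc, hV⟩ := hkey
  obtain ⟨p, q, h1, h2, h3⟩ := hd i' m hi'
  interval_cases c
  · have hx := (vO a p).2.1
    have hy := (vE a q).2.2
    exact ⟨2*p+1, 2*q, by omega, by omega, by omega⟩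
  · have hx := (vE a p).2.2
    have hy := (vE a q).2.2
    exact ⟨2*p, 2*q, by omega, by omega, by omega⟩
  · have hx := (vO a p).2.1
    have hy := (vO a q).2.1
    exact ⟨2*p+1, 2*q+1, by omega, by omega, by omega⟩
end
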